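/- For real s < −1, Σ_{k=1}^∞ s_{−s−5/2, 1/2}(2πk) / k^{1/2−s} = (1/2)(2π)^{1/2−s} Γ(−s−2) · ( −1/(2Γ(1−s)) + 1/Γ(2−s) + 1/(12Γ(−s)) ). -/

import Mathlib

open Complex Real Filter Set MeasureTheory

/-- Pochhammer symbol `(b)ₙ`. -/
noncomputable def poch (b : ℂ) (n : ℕ) : ℂ := ∏ i ∈ Finset.range n, (b + i)

/-- The generalized hypergeometric function `₁F₂(1; b₁, b₂; w)`. -/
noncomputable def oneF2 (b₁ b₂ w : ℂ) : ℂ := ∑' n : ℕ, w ^ n / (poch b₁ n * poch b₂ n)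

/-- The Lommel function of the first kind `s_{μ,ν}(z)`. -/
noncomputable def lommel_s (μ ν z : ℂ) : ℂ :=
  z ^ (μ + 1) / ((μ - ν + 1) * (μ + ν + 1)) *
    oneF2 ((μ - ν + 3) / 2) ((μ + ν + 3) / 2) (-z ^ 2 / 4)

/-- The Bessel function of the first kind `J_ν(z)`. -/
noncomputable def besselJ (ν z : ℂ) : ℂ :=
  ∑' m : ℕ, (-1) ^ m / (Complex.Gamma (m + 1) * Complex.Gamma (ν + m + 1)) * (z / 2) ^ (ν + 2 * m)

/-- The Lommel function of the second kind `S_{μ,ν}(z)` (for `ν ∉ ℤ`). -/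
noncomputable def lommel_S (μ ν z : ℂ) : ℂ :=
  lommel_s μ ν z +
    2 ^ (μ - 1) * Complex.Gamma ((μ - ν + 1) / 2) * Complex.Gamma ((μ + ν + 1) / 2) /
      Complex.sin (ν * (π : ℂ)) *
      (Complex.cos ((μ - ν) * (π : ℂ) / 2) * besselJ (-ν) z -
        Complex.cos ((μ + ν) * (π : ℂ) / 2) * besselJ ν z)





noncomputable def realPoch (b : ℝ) (n : ℕ) : ℝ := ∏ i ∈ Finset.range n, (b + i)

lemma poch_ofReal (t : ℝ) (n : ℕ) : poch ((t : ℝ) : ℂ) n = ((realPoch t n : ℝ) : ℂ) := by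
  unfold poch realPoch
  push_cast
  rfl

lemma realPoch_pos {t : ℝ} (ht : 0 < t) (n : ℕ) : 0 < realPoch t n := by
  unfold realPoch
  exact Finset.prod_pos fun i _ => by positivity

lemma gamma_poch (t : ℝ) (ht : ∀ m : ℕ, t + m ≠ 0) (n : ℕ) :
    Real.Gamma t * realPoch t n = Real.Gamma (t + n) := by
  induction n with
  | zero => simp [realPoch]
  | succ n ih =>
    have h1 : realPoch t (n + 1) = realPoch t n * (t + n) := Finset.prod_range_succ _ _
    have h2 : (t + (n + 1 : ℕ) : ℝ) = (t + n) + 1 := by push_cast; ring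
    rw [h1, h2, Real.Gamma_add_one (ht n), ← ih]; ring

lemma poch_dup (t : ℝ) (n : ℕ) :
    realPoch (t / 2) n * realPoch ((t + 1) / 2) n * 4 ^ n = realPoch t (2 * n) := by
  induction n with
  | zero => simp [realPoch]
  | succ n ih =>
    have h2 : 2 * (n + 1) = (2 * n) + 1 + 1 := by ring
    rw [h2]
    unfold realPoch at *
    rw [Finset.prod_range_succ, Finset.prod_range_succ, Finset.prod_range_succ,
      Finset.prod_range_succ, ← ih]
    push_cast
    ring

lemma poch_shift (t : ℝ) (n : ℕ) :
    realPoch t (2 * n + 2) = t * (t + 1) * realPoch (t + 2) (2 * n) := by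
  unfold realPoch
  rw [Finset.prod_range_succ' _ (2 * n + 1), Finset.prod_range_succ' _ (2 * n)]
  push_cast
  rw [Finset.prod_congr rfl (fun i _ => by push_cast; ring :
    ∀ i ∈ Finset.range (2 * n), (t + ((i : ℝ) + 1 + 1) : ℝ) = t + 2 + i)]
  ring


lemma beta_nat (c : ℝ) (hc : 0 < c) (m : ℕ) :
    ∫ u in (0:ℝ)..1, (u : ℝ) ^ m * (1 - u) ^ (c - 1) =
      (m.factorial : ℝ) * Real.Gamma c / Real.Gamma (m + 1 + c) := by
  have hs : (0 : ℝ) < Complex.re ((m : ℂ) + 1) := by simp; positivity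
  have ht : (0 : ℝ) < Complex.re ((c : ℝ) : ℂ) := by simpa using hc
  have key := Complex.Gamma_mul_Gamma_eq_betaIntegral hs ht
  have hB : Complex.betaIntegral ((m : ℂ) + 1) ((c : ℝ) : ℂ) =
      ((∫ u in (0:ℝ)..1, (u : ℝ) ^ m * (1 - u) ^ (c - 1) : ℝ) : ℂ) := by
    rw [Complex.betaIntegral]
    rw [show ∫ (x : ℝ) in (0)..1, (x:ℂ) ^ ((m:ℂ) + 1 - 1) * (1 - (x:ℂ)) ^ (((c:ℝ):ℂ) - 1)
        = ∫ (x : ℝ) in (0)..1, (((x ^ m * (1 - x) ^ (c - 1) : ℝ)) : ℂ) from ?_,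
      intervalIntegral.integral_ofReal]
    refine intervalIntegral.integral_congr fun x hx => ?_
    rw [Set.uIcc_of_le (by norm_num : (0:ℝ) ≤ 1)] at hx
    have h1x : (0:ℝ) ≤ 1 - x := by linarith [hx.2]
    rw [show ((m:ℂ) + 1 - 1) = ((m : ℕ) : ℂ) by ring, Complex.cpow_natCast]
    rw [show (((c:ℝ):ℂ) - 1) = (((c - 1 : ℝ)):ℂ) by push_cast; ring]
    rw [show ((1:ℂ) - (x:ℂ)) = (((1 - x : ℝ)):ℂ) by push_cast; ring, ← Complex.ofReal_cpow h1x]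
    push_cast
    ring
  rw [hB] at key
  have hΓm : Complex.Gamma ((m : ℂ) + 1) = ((m.factorial : ℝ) : ℂ) := by
    rw [Complex.Gamma_nat_eq_factorial]; push_cast; ring
  have hΓc : Complex.Gamma ((c : ℝ) : ℂ) = ((Real.Gamma c : ℝ) : ℂ) := Complex.Gamma_ofReal c
  have hΓmc : Complex.Gamma ((m : ℂ) + 1 + ((c:ℝ):ℂ)) = ((Real.Gamma (m + 1 + c) : ℝ) : ℂ) := by
    rw [show ((m:ℂ) + 1 + ((c:ℝ):ℂ)) = (((m + 1 + c : ℝ)) : ℂ) by push_cast; ring]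
    exact Complex.Gamma_ofReal _
  rw [hΓm, hΓc, hΓmc] at key
  have hne : Real.Gamma ((m : ℝ) + 1 + c) ≠ 0 := by
    have : (0:ℝ) < (m : ℝ) + 1 + c := by positivity
    exact (Real.Gamma_pos_of_pos this).ne'
  have keyR : (m.factorial : ℝ) * Real.Gamma c =
      Real.Gamma ((m:ℝ) + 1 + c) * ∫ u in (0:ℝ)..1, (u : ℝ) ^ m * (1 - u) ^ (c - 1) := by
    exact_mod_cast key
  rw [eq_div_iff hne]
  linarith [keyR]
lemma integrableOn_rpow_one_sub (c : ℝ) (hc : -1 < c) :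
    IntegrableOn (fun u : ℝ => (1 - u) ^ c) (Set.Ioc (0:ℝ) 1) volume := by
  have h0 : IntervalIntegrable (fun x : ℝ => x ^ c) volume 0 1 :=
    intervalIntegral.intervalIntegrable_rpow' hc
  have h1 : IntervalIntegrable (fun u : ℝ => (1 - u) ^ c) volume 0 1 := by
    simpa using (h0.comp_sub_left 1).symm
  rw [intervalIntegrable_iff_integrableOn_Ioc_of_le (by norm_num : (0:ℝ) ≤ 1)] at h1
  exact h1

lemma integrableOn_mul_rpow (c : ℝ) (hc : -1 < c) {g : ℝ → ℝ} (hg : Continuous g)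
    {C : ℝ} (hC : ∀ u ∈ Set.Ioc (0:ℝ) 1, |g u| ≤ C) :
    IntegrableOn (fun u : ℝ => g u * (1 - u) ^ c) (Set.Ioc (0:ℝ) 1) volume := by
  refine Integrable.bdd_mul (c := C) (integrableOn_rpow_one_sub c hc)
    hg.aestronglyMeasurable.restrict ?_
  rw [ae_restrict_iff' measurableSet_Ioc]
  exact Filter.Eventually.of_forall fun u hu => by simpa using hC u hu

lemma core (σ : ℝ) (hσ : 1 < σ) (x : ℝ) :
    HasSum (fun n : ℕ => (-1)^n * x^(2*n) / Real.Gamma (2*n + σ))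
      ((1 / Real.Gamma (σ-1)) * ∫ u in (0:ℝ)..1, (1-u)^(σ-2) * Real.cos (x*u)) := by
  have hσ2 : (-1:ℝ) < σ - 2 := by linarith
  set μ := volume.restrict (Set.Ioc (0:ℝ) 1) with hμ
  set F : ℕ → ℝ → ℝ := fun n u => ((-1)^n * x^(2*n) / (2*n).factorial) * (u^(2*n) * (1-u)^(σ-2))
    with hF
  have hFint : ∀ n, Integrable (F n) μ := by
    intro n
    exact ((integrableOn_mul_rpow (σ-2) hσ2 (by continuity : Continuous fun u : ℝ => u ^ (2*n))
      (C := 1) (fun u hu => by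
        rw [_root_.abs_of_nonneg (pow_nonneg hu.1.le _)]
        exact pow_le_one₀ hu.1.le hu.2)).const_mul _)
  have hK : Integrable (fun u : ℝ => (1 - u) ^ (σ-2)) μ := integrableOn_rpow_one_sub _ hσ2
  set K : ℝ := ∫ u, (1-u)^(σ-2) ∂μ with hKdef
  have hsum : Summable fun n => ∫ u, ‖F n u‖ ∂μ := by
    refine Summable.of_nonneg_of_le (fun n => integral_nonneg fun u => norm_nonneg _)
      (fun n => ?_) ((Real.summable_pow_div_factorial (x^2)).mul_right K)
    have hb : ∀ᵐ u ∂μ, ‖F n u‖ ≤ ((x^2)^n / n.factorial) * (1-u)^(σ-2) := by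
      rw [hμ, ae_restrict_iff' measurableSet_Ioc]
      refine Filter.Eventually.of_forall fun u hu => ?_
      have h1u : (0:ℝ) ≤ 1 - u := by linarith [hu.2]
      have hu0 : (0:ℝ) < u := hu.1
      have hr : (0:ℝ) ≤ (1-u)^(σ-2) := Real.rpow_nonneg h1u _
      have e1 : ‖F n u‖ = (|x|^(2*n) / (2*n).factorial) * (u^(2*n) * (1-u)^(σ-2)) := by
        rw [hF]
        simp only [Real.norm_eq_abs, abs_mul, abs_div, _root_.abs_pow, abs_neg, abs_one, one_pow,
          one_mul, Nat.abs_cast]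
        rw [_root_.abs_of_nonneg hu0.le, _root_.abs_of_nonneg hr]
      rw [e1]
      have h1 : |x|^(2*n) / (2*n).factorial ≤ (x^2)^n / n.factorial := by
        rw [show |x|^(2*n) = (x^2)^n by rw [pow_mul, _root_.sq_abs]]
        exact div_le_div_of_nonneg_left (by positivity) (by positivity)
          (by exact_mod_cast Nat.factorial_le (by omega : n ≤ 2*n))
      have h2 : u^(2*n) * (1-u)^(σ-2) ≤ 1 * (1-u)^(σ-2) :=
        mul_le_mul_of_nonneg_right (pow_le_one₀ hu0.le hu.2) hr
      have h3 : (0:ℝ) ≤ u^(2*n) * (1-u)^(σ-2) := by positivity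
      nlinarith [mul_le_mul h1 h2 h3 (by positivity : (0:ℝ) ≤ (x^2)^n / n.factorial)]
    calc ∫ u, ‖F n u‖ ∂μ ≤ ∫ u, ((x^2)^n / n.factorial) * (1-u)^(σ-2) ∂μ :=
          integral_mono_ae (hFint n).norm (hK.const_mul _) hb
      _ = (x^2)^n / n.factorial * K := by rw [integral_const_mul]
  have main := MeasureTheory.hasSum_integral_of_summable_integral_norm hFint hsum
  have hΓσ1 : (0:ℝ) < Real.Gamma (σ - 1) := Real.Gamma_pos_of_pos (by linarith)
  have hint_eq : ∀ n : ℕ, ∫ u, F n u ∂μ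
      = Real.Gamma (σ-1) * ((-1)^n * x^(2*n) / Real.Gamma (2*n + σ)) := by
    intro n
    rw [hF]
    simp only
    rw [integral_const_mul, hμ,
      ← intervalIntegral.integral_of_le (by norm_num : (0:ℝ) ≤ 1)]
    have hbeta := beta_nat (σ - 1) (by linarith) (2*n)
    rw [show (σ - 1 - 1) = σ - 2 by ring, show ((2*n : ℕ) : ℝ) + 1 + (σ - 1) = 2*n + σ by
      push_cast; ring] at hbeta
    rw [hbeta]
    have hfac : ((2*n).factorial : ℝ) ≠ 0 := by positivity
    have hΓ2 : (0:ℝ) < Real.Gamma (2*n + σ) := Real.Gamma_pos_of_pos (by positivity)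
    field_simp
  have htsum : ∀ u : ℝ, (∑' n, F n u) = (1-u)^(σ-2) * Real.cos (x*u) := by
    intro u
    rw [hF]
    simp only
    have e : ∀ n : ℕ, ((-1:ℝ))^n * x^(2*n) / (2*n).factorial * (u^(2*n) * (1-u)^(σ-2))
        = ((-1)^n * (x*u)^(2*n) / (2*n).factorial) * ((1-u)^(σ-2)) := by
      intro n; rw [mul_pow]; ring
    rw [tsum_congr e, tsum_mul_right, ← Real.cos_eq_tsum (x*u)]
    ring
  rw [funext hint_eq] at main
  have main2 := main.mul_left (1 / Real.Gamma (σ-1))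
  have e2 : (fun n : ℕ => 1 / Real.Gamma (σ-1) *
      (Real.Gamma (σ-1) * ((-1)^n * x^(2*n) / Real.Gamma (2*n + σ))))
      = fun n : ℕ => (-1)^n * x^(2*n) / Real.Gamma (2*n + σ) := by
    funext n; field_simp
  rw [e2] at main2
  have e3 : (∫ u, (∑' n, F n u) ∂μ) = ∫ u in (0:ℝ)..1, (1-u)^(σ-2) * Real.cos (x*u) := by
    rw [integral_congr_ae (Filter.Eventually.of_forall htsum), hμ,
      ← intervalIntegral.integral_of_le (by norm_num : (0:ℝ) ≤ 1)]
  rw [e3] at main2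
  exact main2

lemma fourier_aux {u : ℝ} (hu : u ∈ Set.Icc (0:ℝ) 1) :
    HasSum (fun k : ℕ => Real.cos (2*π*(k+1)*u) / ((k:ℝ)+1)^2) (π^2 * (u^2 - u + 1/6)) := by
  have h := hasSum_one_div_nat_pow_mul_cos (k := 1) one_ne_zero hu
  have hb2 : (bernoulli 2 : ℚ) = 1/6 := by
    rw [bernoulli_eq_bernoulli'_of_ne_one (by norm_num), bernoulli'_two]
  have hB : (Polynomial.map (algebraMap ℚ ℝ) (Polynomial.bernoulli (2*1))).eval u
      = u^2 - u + 1/6 := by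
    norm_num
    simp [Polynomial.bernoulli, Finset.sum_range_succ, bernoulli_one, hb2]
    ring
  rw [hB] at h
  have hval : ((-1:ℝ))^(1+1) * (2*π)^(2*1) / 2 / ((2*1).factorial : ℕ) * (u^2 - u + 1/6)
      = π^2 * (u^2 - u + 1/6) := by
    norm_num [Nat.factorial]
    left
    ring
  rw [hval] at h
  have h2 := (hasSum_nat_add_iff' (f := fun n : ℕ => 1/(n:ℝ)^(2*1) * Real.cos (2*π*n*u)) 1).mpr h
  simp only [Finset.range_one, Finset.sum_singleton] at h2
  norm_num at h2
  simpa [div_eq_mul_inv, mul_comm] using h2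
lemma intervalIntegrable_one_sub_rpow (c : ℝ) (hc : -1 < c) :
    IntervalIntegrable (fun u : ℝ => (1-u)^c) volume 0 1 := by
  have h0 : IntervalIntegrable (fun x : ℝ => x ^ c) volume 0 1 :=
    intervalIntegral.intervalIntegrable_rpow' hc
  simpa using (h0.comp_sub_left 1).symm

lemma int_one_sub_rpow (c : ℝ) (hc : -1 < c) :
    ∫ u in (0:ℝ)..1, (1-u)^c = 1/(c+1) := by
  have h := intervalIntegral.integral_comp_sub_left (a := 0) (b := 1) (fun y : ℝ => y^c) 1
  norm_num at h
  rw [h, integral_rpow (Or.inl hc), Real.one_rpow, Real.zero_rpow (by linarith), one_div]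
  ring

lemma final_integral (σ : ℝ) (hσ : 1 < σ) :
    ∫ u in (0:ℝ)..1, (1-u)^(σ-2) * (u^2 - u + 1/6)
      = 1/(σ+1) - 1/σ + 1/(6*(σ-1)) := by
  have key : Set.EqOn (fun u : ℝ => (1-u)^(σ-2) * (u^2-u+1/6))
      (fun u : ℝ => ((1-u)^σ - (1-u)^(σ-1)) + (1-u)^(σ-2) * (1/6)) (Set.uIcc 0 1) := by
    intro u hu
    rw [Set.uIcc_of_le (by norm_num : (0:ℝ) ≤ 1)] at hu
    simp only
    rcases eq_or_lt_of_le hu.2 with h1 | h1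
    · rw [h1, sub_self]
      rw [Real.zero_rpow (by linarith : σ ≠ 0), Real.zero_rpow (by linarith : σ - 1 ≠ 0)]
      ring
    · have hpos : (0:ℝ) < 1 - u := by linarith
      rw [show σ = (σ-2)+2 by ring, Real.rpow_add hpos]
      rw [show (σ-2)+2-1 = (σ-2)+1 by ring, Real.rpow_add hpos, Real.rpow_one]
      rw [show ((2:ℝ)) = ((2:ℕ):ℝ) by norm_num, Real.rpow_natCast]
      ring
  rw [intervalIntegral.integral_congr key]
  have i1 : IntervalIntegrable (fun u : ℝ => (1-u)^σ) volume 0 1 :=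
    intervalIntegrable_one_sub_rpow σ (by linarith)
  have i2 : IntervalIntegrable (fun u : ℝ => (1-u)^(σ-1)) volume 0 1 :=
    intervalIntegrable_one_sub_rpow (σ-1) (by linarith)
  have i3 : IntervalIntegrable (fun u : ℝ => (1-u)^(σ-2) * (1/6)) volume 0 1 :=
    (intervalIntegrable_one_sub_rpow (σ-2) (by linarith)).mul_const _
  rw [intervalIntegral.integral_add (i1.sub i2) i3, intervalIntegral.integral_sub i1 i2,
    intervalIntegral.integral_mul_const]
  rw [int_one_sub_rpow σ (by linarith), int_one_sub_rpow (σ-1) (by linarith),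
    int_one_sub_rpow (σ-2) (by linarith)]
  have h1 : σ - 1 ≠ 0 := by linarith
  have h2 : σ ≠ 0 := by linarith
  have h3 : σ + 1 ≠ 0 := by linarith
  rw [show σ - 2 + 1 = σ - 1 by ring]
  field_simp
  ring_nf
  field_simp
  ring

lemma outer (σ : ℝ) (hσ : 1 < σ) :
    HasSum (fun k : ℕ => (1/((k:ℝ)+1)^2) *
        ∫ u in (0:ℝ)..1, (1-u)^(σ-2) * Real.cos (2*π*((k:ℝ)+1)*u))
      (π^2 * (1/(σ+1) - 1/σ + 1/(6*(σ-1)))) := by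
  have hσ2 : (-1:ℝ) < σ - 2 := by linarith
  set μ := volume.restrict (Set.Ioc (0:ℝ) 1) with hμ
  set F : ℕ → ℝ → ℝ := fun k u =>
    (1/((k:ℝ)+1)^2) * (Real.cos (2*π*((k:ℝ)+1)*u) * (1-u)^(σ-2)) with hF
  have hFint : ∀ k, Integrable (F k) μ := by
    intro k
    exact (integrableOn_mul_rpow (σ-2) hσ2 (by continuity) (C := 1)
      (fun u _ => abs_cos_le_one _)).const_mul _
  have hK : Integrable (fun u : ℝ => (1 - u) ^ (σ-2)) μ := integrableOn_rpow_one_sub _ hσ2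
  set K : ℝ := ∫ u, (1-u)^(σ-2) ∂μ with hKdef
  have hsummable : Summable (fun k : ℕ => 1/((k:ℝ)+1)^2 * K) := by
    apply Summable.mul_right
    have := (summable_nat_add_iff (f := fun n : ℕ => 1/(n:ℝ)^2) 1).mpr
      ((Real.summable_one_div_nat_pow (p := 2)).mpr one_lt_two)
    refine this.congr fun n => by push_cast; ring
  have hsum : Summable fun k => ∫ u, ‖F k u‖ ∂μ := by
    refine Summable.of_nonneg_of_le (fun k => integral_nonneg fun u => norm_nonneg _)
      (fun k => ?_) hsummable
    have hb : ∀ᵐ u ∂μ, ‖F k u‖ ≤ (1/((k:ℝ)+1)^2) * (1-u)^(σ-2) := by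
      rw [hμ, ae_restrict_iff' measurableSet_Ioc]
      refine Filter.Eventually.of_forall fun u hu => ?_
      have h1u : (0:ℝ) ≤ 1 - u := by linarith [hu.2]
      have hr : (0:ℝ) ≤ (1-u)^(σ-2) := Real.rpow_nonneg h1u _
      rw [hF]
      simp only [Real.norm_eq_abs, abs_mul, _root_.abs_of_nonneg hr,
        _root_.abs_of_nonneg (by positivity : (0:ℝ) ≤ 1/((k:ℝ)+1)^2)]
      have hcos := abs_cos_le_one (2*π*((k:ℝ)+1)*u)
      have h2 : |Real.cos (2*π*((k:ℝ)+1)*u)| * (1-u)^(σ-2) ≤ (1-u)^(σ-2) := by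
        calc |Real.cos (2*π*((k:ℝ)+1)*u)| * (1-u)^(σ-2) ≤ 1 * (1-u)^(σ-2) :=
              mul_le_mul_of_nonneg_right hcos hr
          _ = (1-u)^(σ-2) := one_mul _
      exact mul_le_mul_of_nonneg_left h2 (by positivity)
    calc ∫ u, ‖F k u‖ ∂μ ≤ ∫ u, (1/((k:ℝ)+1)^2) * (1-u)^(σ-2) ∂μ :=
          integral_mono_ae (hFint k).norm (hK.const_mul _) hb
      _ = 1/((k:ℝ)+1)^2 * K := by rw [integral_const_mul]
  have main := MeasureTheory.hasSum_integral_of_summable_integral_norm hFint hsum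
  have hint_eq : ∀ k : ℕ, ∫ u, F k u ∂μ
      = (1/((k:ℝ)+1)^2) * ∫ u in (0:ℝ)..1, (1-u)^(σ-2) * Real.cos (2*π*((k:ℝ)+1)*u) := by
    intro k
    rw [hF]
    simp only
    rw [integral_const_mul, hμ, ← intervalIntegral.integral_of_le (by norm_num : (0:ℝ) ≤ 1)]
    congr 1
    refine intervalIntegral.integral_congr fun u _ => ?_
    simp only [mul_comm]
  rw [funext hint_eq] at main
  have e3 : (∫ u, (∑' k, F k u) ∂μ) = π^2 * (1/(σ+1) - 1/σ + 1/(6*(σ-1))) := by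
    have hptwise : ∀ u ∈ Set.Ioc (0:ℝ) 1,
        (∑' k, F k u) = (π^2 * (u^2 - u + 1/6)) * (1-u)^(σ-2) := by
      intro u hu
      have hf := (fourier_aux (Set.mem_Icc.mpr ⟨hu.1.le, hu.2⟩)).mul_right ((1-u)^(σ-2))
      have : (fun k : ℕ => Real.cos (2*π*((k:ℝ)+1)*u) / ((k:ℝ)+1)^2 * (1-u)^(σ-2))
          = (fun k : ℕ => F k u) := by
        funext k; rw [hF]; simp only; ring
      rw [← this]
      exact hf.tsum_eq
    rw [hμ, setIntegral_congr_fun measurableSet_Ioc hptwise,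
      ← intervalIntegral.integral_of_le (by norm_num : (0:ℝ) ≤ 1)]
    have : ∀ u : ℝ, (π^2 * (u^2 - u + 1/6)) * (1-u)^(σ-2)
        = π^2 * ((1-u)^(σ-2) * (u^2 - u + 1/6)) := fun u => by ring
    rw [intervalIntegral.integral_congr (fun u _ => this u), intervalIntegral.integral_const_mul,
      final_integral σ hσ]
  rw [e3] at main
  exact main
lemma oneF2_eq (σ : ℝ) (hσ : 1 < σ) (hσ2 : σ ≠ 2) (x : ℝ) :
    oneF2 ((σ/2 : ℝ) : ℂ) (((σ+1)/2 : ℝ) : ℂ) (-(x:ℂ)^2/4)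
      = (((σ-2) * (σ-1) * Real.Gamma (σ-2) *
          ((1/Real.Gamma (σ-1)) * ∫ u in (0:ℝ)..1, (1-u)^(σ-2) * Real.cos (x*u)) : ℝ) : ℂ) := by
  have hpoch : ∀ n : ℕ, realPoch (σ/2) n * realPoch ((σ+1)/2) n ≠ 0 := fun n =>
    (mul_pos (realPoch_pos (by linarith) n) (realPoch_pos (by linarith) n)).ne'
  have hterm : ∀ n : ℕ, (-(x:ℂ)^2/4)^n / (poch ((σ/2 : ℝ) : ℂ) n * poch (((σ+1)/2 : ℝ) : ℂ) n)
      = ((((σ-2) * (σ-1) * Real.Gamma (σ-2)) *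
          ((-1)^n * x^(2*n) / Real.Gamma (2*n + σ)) : ℝ) : ℂ) := by
    intro n
    rw [poch_ofReal, poch_ofReal]
    have hreal : (-x^2/4)^n / (realPoch (σ/2) n * realPoch ((σ+1)/2) n)
        = ((σ-2) * (σ-1) * Real.Gamma (σ-2)) * ((-1)^n * x^(2*n) / Real.Gamma (2*n + σ)) := by
      have hdup := poch_dup σ n
      have hΓ : Real.Gamma (2*n + σ) = Real.Gamma (σ-2) * ((σ-2) * (σ-1) * realPoch σ (2*n)) := by
        have hne : ∀ m : ℕ, σ - 2 + m ≠ 0 := by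
          intro m hh
          rcases Nat.eq_zero_or_pos m with h | h
          · rw [h] at hh; norm_num at hh; exact hσ2 (by linarith)
          · have h1 : (1:ℝ) ≤ m := by exact_mod_cast h
            linarith
        have h1 := gamma_poch (σ-2) hne (2*n+2)
        have h2 := poch_shift (σ-2) n
        rw [show σ-2+1 = σ-1 by ring, show σ-2+2 = σ by ring] at h2
        rw [h2] at h1
        rw [show (2*(n:ℝ) + σ) = σ - 2 + ((2*n+2 : ℕ):ℝ) by push_cast; ring, ← h1]
      have hP : realPoch (σ/2) n * realPoch ((σ+1)/2) n = realPoch σ (2*n) / 4^n := by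
        rw [← hdup]; field_simp
      have hPpos : (0:ℝ) < realPoch σ (2*n) := realPoch_pos (by linarith) (2*n)
      have h4 : ((4:ℝ))^n ≠ 0 := by positivity
      have hneg : (-x^2/4)^n = (-1)^n * x^(2*n) / 4^n := by
        rw [div_pow, neg_pow, pow_mul]
      have hPne : realPoch σ (2*n) ≠ 0 := hPpos.ne'
      have hD : Real.Gamma (σ-2) * ((σ-2) * (σ-1) * realPoch σ (2*n)) ≠ 0 := by
        rw [← hΓ]
        exact (Real.Gamma_pos_of_pos (by positivity : (0:ℝ) < 2*n + σ)).ne'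
      rw [hneg, hP, hΓ, div_div_div_comm, div_self h4, div_one, mul_div_assoc']
      rw [div_eq_div_iff hPne hD]
      ring
    rw [← hreal]
    push_cast
    ring
  unfold oneF2
  rw [tsum_congr hterm, ← Complex.ofReal_tsum, tsum_mul_left, (core σ hσ x).tsum_eq]
theorem lommel_s_series_shifted (s : ℝ) (hs : s < -1) :
    ∑' k : ℕ, lommel_s (-(s : ℂ) - 5 / 2) (1 / 2) ((2 * π * (k + 1) : ℝ) : ℂ) /
        ((k : ℂ) + 1) ^ ((1 : ℂ) / 2 - s) =
      (1 / 2) * ((2 * π : ℝ) : ℂ) ^ ((1 : ℂ) / 2 - s) * Complex.Gamma (-(s : ℂ) - 2) *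
        (-1 / (2 * Complex.Gamma (1 - (s : ℂ))) + 1 / Complex.Gamma (2 - (s : ℂ)) +
          1 / (12 * Complex.Gamma (-(s : ℂ)))) := by
  have hπ : (0:ℝ) < π := Real.pi_pos
  by_cases hcase : s = -2
  · -- degenerate case: both sides vanish
    have h0 : ∀ k : ℕ, lommel_s (-(s : ℂ) - 5 / 2) (1 / 2) ((2 * π * (k + 1) : ℝ) : ℂ) = 0 := by
      intro k
      unfold lommel_s
      rw [show (-(s:ℂ) - 5/2 - 1/2 + 1) = 0 by rw [hcase]; push_cast; ring]
      rw [zero_mul, div_zero, zero_mul]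
    have hG : Complex.Gamma (-(s:ℂ) - 2) = 0 := by
      rw [show -(s:ℂ) - 2 = 0 by rw [hcase]; push_cast; ring, Complex.Gamma_zero]
    have h1 : ∀ k : ℕ, lommel_s (-(s : ℂ) - 5 / 2) (1 / 2) ((2 * π * (k + 1) : ℝ) : ℂ) /
        ((k : ℂ) + 1) ^ ((1 : ℂ) / 2 - s) = 0 := fun k => by rw [h0 k, zero_div]
    rw [tsum_congr h1, tsum_zero, hG]
    ring
  · set σ : ℝ := -s with hσdef
    have hσ : 1 < σ := by rw [hσdef]; linarith
    have hσ2 : σ ≠ 2 := fun h => hcase (by rw [hσdef] at h; linarith)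
    have hσ10 : σ - 1 ≠ 0 := by linarith
    have hσ20 : σ - 2 ≠ 0 := fun h => hσ2 (by linarith)
    have hΓσ1 : Real.Gamma (σ-1) ≠ 0 := (Real.Gamma_pos_of_pos (by linarith)).ne'
    set c : ℝ := (2*π)^(σ-3/2) * Real.Gamma (σ-2) * (1/Real.Gamma (σ-1)) with hcdef
    set t : ℕ → ℝ := fun k => c * ((1/((k:ℝ)+1)^2) *
      ∫ u in (0:ℝ)..1, (1-u)^(σ-2) * Real.cos (2*π*((k:ℝ)+1)*u)) with htdef
    have stepA : ∀ k : ℕ, lommel_s (-(s : ℂ) - 5 / 2) (1 / 2) ((2 * π * (k + 1) : ℝ) : ℂ) /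
        ((k : ℂ) + 1) ^ ((1 : ℂ) / 2 - s) = ((t k : ℝ) : ℂ) := by
      intro k
      have hk : (0:ℝ) < (k:ℝ) + 1 := by positivity
      have hx : (0:ℝ) < 2*π*((k:ℝ)+1) := by positivity
      unfold lommel_s
      rw [show -(s:ℂ) - 5/2 + 1 = ((σ - 3/2 : ℝ) : ℂ) by rw [hσdef]; push_cast; ring]
      rw [show ((2 * π * ((k:ℝ) + 1) : ℝ) : ℂ) ^ (((σ - 3/2 : ℝ) : ℂ))
          = (((2 * π * ((k:ℝ)+1)) ^ (σ - 3/2) : ℝ) : ℂ) from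
        (Complex.ofReal_cpow hx.le _).symm]
      rw [show (-(s:ℂ) - 5/2 - 1/2 + 1) * (-(s:ℂ) - 5/2 + 1/2 + 1)
          = (((σ-2) * (σ-1) : ℝ) : ℂ) by rw [hσdef]; push_cast; ring]
      rw [show (-(s:ℂ) - 5/2 - 1/2 + 3)/2 = ((σ/2 : ℝ) : ℂ) by rw [hσdef]; push_cast; ring]
      rw [show (-(s:ℂ) - 5/2 + 1/2 + 3)/2 = (((σ+1)/2 : ℝ) : ℂ) by rw [hσdef]; push_cast; ring]
      rw [oneF2_eq σ hσ hσ2 (2*π*((k:ℝ)+1))]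
      rw [show ((k:ℂ) + 1) = (((k:ℝ) + 1 : ℝ) : ℂ) by push_cast; ring]
      rw [show (1:ℂ)/2 - (s:ℂ) = ((σ + 1/2 : ℝ) : ℂ) by rw [hσdef]; push_cast; ring]
      rw [show ((((k:ℝ) + 1 : ℝ)) : ℂ) ^ (((σ + 1/2 : ℝ) : ℂ))
          = ((((k:ℝ)+1) ^ (σ + 1/2) : ℝ) : ℂ) from (Complex.ofReal_cpow hk.le _).symm]
      norm_cast
      push_cast
      -- now a real identity
      have e1 : (2*π*((k:ℝ)+1)) ^ (σ - 3/2) = (2*π)^(σ-3/2) * ((k:ℝ)+1)^(σ-3/2) :=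
        Real.mul_rpow (by positivity) hk.le
      have e2 : ((k:ℝ)+1)^(σ + 1/2) = ((k:ℝ)+1)^(σ - 3/2) * ((k:ℝ)+1)^2 := by
        rw [show σ + 1/2 = σ - 3/2 + ((2:ℕ):ℝ) by push_cast; ring, Real.rpow_add hk,
          Real.rpow_natCast]
      rw [e1, e2]
      simp only [htdef, hcdef]
      have hkp : ((k:ℝ)+1)^(σ - 3/2) ≠ 0 := (Real.rpow_pos_of_pos hk _).ne'
      have hk2 : (((k:ℝ)+1)^2 : ℝ) ≠ 0 := by positivity
      field_simp
    rw [tsum_congr stepA, ← Complex.ofReal_tsum]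
    have hT : (∑' k, t k) = c * (π^2 * (1/(σ+1) - 1/σ + 1/(6*(σ-1)))) :=
      ((outer σ hσ).mul_left c).tsum_eq
    rw [hT]
    -- rewrite RHS as a real number
    rw [show (1:ℂ)/2 - (s:ℂ) = ((σ + 1/2 : ℝ) : ℂ) by rw [hσdef]; push_cast; ring]
    rw [show (((2 * π : ℝ)) : ℂ) ^ (((σ + 1/2 : ℝ) : ℂ)) = (((2*π) ^ (σ + 1/2) : ℝ) : ℂ) from
      (Complex.ofReal_cpow (by positivity) _).symm]
    rw [show -(s:ℂ) - 2 = ((σ - 2 : ℝ) : ℂ) by rw [hσdef]; push_cast; ring,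
      Complex.Gamma_ofReal]
    rw [show 1 - (s:ℂ) = ((σ + 1 : ℝ) : ℂ) by rw [hσdef]; push_cast; ring,
      Complex.Gamma_ofReal]
    rw [show 2 - (s:ℂ) = ((σ + 2 : ℝ) : ℂ) by rw [hσdef]; push_cast; ring,
      Complex.Gamma_ofReal]
    rw [show -(s:ℂ) = ((σ : ℝ) : ℂ) by rw [hσdef]; push_cast; ring,
      Complex.Gamma_ofReal]
    have : ((1:ℂ)/2) * (((2*π) ^ (σ + 1/2) : ℝ) : ℂ) * ((Real.Gamma (σ-2) : ℝ) : ℂ) *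
        (-1 / (2 * ((Real.Gamma (σ+1) : ℝ) : ℂ)) + 1 / ((Real.Gamma (σ+2) : ℝ) : ℂ) +
          1 / (12 * ((Real.Gamma σ : ℝ) : ℂ)))
        = (((1/2) * ((2*π) ^ (σ + 1/2)) * Real.Gamma (σ-2) *
            (-1 / (2 * Real.Gamma (σ+1)) + 1 / Real.Gamma (σ+2) + 1 / (12 * Real.Gamma σ)) : ℝ) : ℂ) := by
      push_cast
      ring
    rw [this, Complex.ofReal_inj]
    -- final real identity
    have g1 : Real.Gamma σ = (σ - 1) * Real.Gamma (σ - 1) := by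
      rw [show σ = (σ - 1) + 1 by ring, Real.Gamma_add_one hσ10]
      ring_nf
    have g2 : Real.Gamma (σ + 1) = σ * Real.Gamma σ := Real.Gamma_add_one (by linarith)
    have g3 : Real.Gamma (σ + 2) = (σ + 1) * Real.Gamma (σ + 1) := by
      rw [show σ + 2 = (σ + 1) + 1 by ring, Real.Gamma_add_one (by linarith)]
    have e4 : (2*π) ^ (σ + 1/2) = (2*π)^(σ - 3/2) * (2*π)^2 := by
      rw [show σ + 1/2 = σ - 3/2 + ((2:ℕ):ℝ) by push_cast; ring, Real.rpow_add (by positivity),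
        Real.rpow_natCast]
    rw [hcdef, g3, g2, g1, e4]
    have hσ0 : σ ≠ 0 := by linarith
    have hσp1 : σ + 1 ≠ 0 := by linarith
    field_simp
    ring
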